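/- arXiv:0909.3367 — 2 statements merged into one kernel-verified Lean document; each statement's English description precedes it below -/
import Mathlib

section
/- (Generic singularities, Case 23) Let α, β, c ∈ ℂ satisfy (α + 2β)·c^2 + (2α + 3β) = 0. Then the point η := (1,1,1,−1,−1,−1,c,c,−c,−c) ∈ ℂ^{10} satisfies S_1(η) = 0 and there exists μ ∈ ℂ with (∂F_{α,β}/∂x_i)(η) = μ for all i = 0,…,9; that is, η is a singular point of the hyperquintic Q_{(α:β)} in ℙ^8(ℂ). -/
open MvPolynomial Finset

lemma mes_zero (s : Multiset ℂ) : s.esymm 0 = 1 := by simp [Multiset.esymm]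
lemma mes_nil (n : ℕ) : (0 : Multiset ℂ).esymm (n+1) = 0 := by simp [Multiset.esymm, Multiset.powersetCard_zero_right]
lemma mes_cons (a : ℂ) (s : Multiset ℂ) (n : ℕ) :
    (a ::ₘ s).esymm (n+1) = s.esymm (n+1) + a * s.esymm n := by
  simp [Multiset.esymm, Multiset.powersetCard_cons, Multiset.map_map, Function.comp,
    Multiset.sum_map_mul_left]
lemma mes_singleton (a : ℂ) (n : ℕ) : ({a} : Multiset ℂ).esymm (n+1) = if n = 0 then a else 0 := by
  rw [← Multiset.cons_zero, mes_cons]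
  cases n <;> simp [mes_nil, mes_zero]

lemma pderiv_prod_X (i : Fin 10) (t : Finset (Fin 10)) (h : i ∉ t) :
    pderiv i (∏ j ∈ t, (X j : MvPolynomial (Fin 10) ℂ)) = 0 := by
  induction t using Finset.induction with
  | empty => simp
  | @insert a s ha ih =>
    rw [Finset.prod_insert ha, pderiv_mul,
      pderiv_X_of_ne (by rintro rfl; exact h (Finset.mem_insert_self a s)),
      ih (fun hi => h (Finset.mem_insert_of_mem hi))]
    ring

lemma pderiv_prod_X_insert (i : Fin 10) (t : Finset (Fin 10)) (h : i ∉ t) :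
    pderiv i (∏ j ∈ insert i t, (X j : MvPolynomial (Fin 10) ℂ)) = ∏ j ∈ t, X j := by
  rw [Finset.prod_insert h, pderiv_mul, pderiv_X_self, one_mul, pderiv_prod_X i t h,
    mul_zero, add_zero]

lemma eval_esymm (η : Fin 10 → ℂ) (n : ℕ) :
    eval η (esymm (Fin 10) ℂ n) = (Finset.univ.val.map η).esymm n := by
  rw [Finset.esymm_map_val, esymm, map_sum]
  exact Finset.sum_congr rfl fun t _ => by simp [eval_prod]

lemma eval_pderiv_esymm (η : Fin 10 → ℂ) (i : Fin 10) (n : ℕ) :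
    eval η (pderiv i (esymm (Fin 10) ℂ (n+1)))
      = ((Finset.univ.erase i).val.map η).esymm n := by
  have hu : (Finset.univ : Finset (Fin 10)) = insert i (Finset.univ.erase i) :=
    (Finset.insert_erase (Finset.mem_univ i)).symm
  have hni : i ∉ Finset.univ.erase i := Finset.notMem_erase i _
  have hdisj : Disjoint ((Finset.univ.erase i).powersetCard (n+1))
      (((Finset.univ.erase i).powersetCard n).image (insert i)) := by
    rw [Finset.disjoint_left]
    rintro t ht htimg
    obtain ⟨s, hs, rfl⟩ := Finset.mem_image.1 htimg
    exact hni ((Finset.mem_powersetCard.1 ht).1 (Finset.mem_insert_self i s))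
  rw [Finset.esymm_map_val, esymm]
  conv_lhs => rw [hu, Finset.powersetCard_succ_insert hni]
  rw [Finset.sum_union hdisj, map_add, map_add, map_sum, map_sum, map_sum, map_sum]
  have h1 : ∑ t ∈ (Finset.univ.erase i).powersetCard (n+1),
      eval η (pderiv i (∏ j ∈ t, (X j : MvPolynomial (Fin 10) ℂ))) = 0 := by
    apply Finset.sum_eq_zero
    intro t ht
    rw [pderiv_prod_X i t (fun hi => hni ((Finset.mem_powersetCard.1 ht).1 hi)), map_zero]
  rw [h1, zero_add, Finset.sum_image (fun t₁ h₁ t₂ h₂ he => by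
    have e1 : i ∉ t₁ := fun hi => hni ((Finset.mem_powersetCard.1 h₁).1 hi)
    have e2 : i ∉ t₂ := fun hi => hni ((Finset.mem_powersetCard.1 h₂).1 hi)
    rw [← Finset.erase_insert e1, ← Finset.erase_insert e2, he])]
  apply Finset.sum_congr rfl
  intro t ht
  rw [pderiv_prod_X_insert i t (fun hi => hni ((Finset.mem_powersetCard.1 ht).1 hi)), eval_prod]
  simp


/-- **Case 23, generic singularities.** If `(α + 2β)·c² + (2α + 3β) = 0`, then the
point `η = (1,1,1,−1,−1,−1,c,c,−c,−c)` satisfies `S₁(η) = 0` and is a singular point of the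
hyperquintic `Q_{(α:β)} = {α·S₅ + β·S₂·S₃ = 0}` in `ℙ⁸(ℂ)`. -/
theorem case23_generic_singularity (α β c : ℂ)
    (hc : (α + 2 * β) * c ^ 2 + (2 * α + 3 * β) = 0) (η : Fin 10 → ℂ)
    (hη : η = ![1, 1, 1, -1, -1, -1, c, c, -c, -c]) :
    eval η (esymm (Fin 10) ℂ 1) = 0 ∧
    ∃ μ : ℂ, ∀ i, eval η (pderiv i
      (C α * esymm (Fin 10) ℂ 5 + C β * (esymm (Fin 10) ℂ 2 * esymm (Fin 10) ℂ 3))) = μ := by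
  have huniv : (Finset.univ : Finset (Fin 10)).val = {0,1,2,3,4,5,6,7,8,9} := by decide
  have hM : Finset.univ.val.map η = ({1, 1, 1, -1, -1, -1, c, c, -c, -c} : Multiset ℂ) := by
    rw [huniv, hη]; rfl
  have E1 : (Finset.univ.val.map η).esymm 1 = 0 := by
    rw [hM]; simp [mes_cons, mes_nil, mes_zero, mes_singleton]
  have E2 : (Finset.univ.val.map η).esymm 2 = -3 - 2*c^2 := by
    rw [hM]; simp [mes_cons, mes_nil, mes_zero, mes_singleton]; ring
  have E3 : (Finset.univ.val.map η).esymm 3 = 0 := by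
    rw [hM]; simp [mes_cons, mes_nil, mes_zero, mes_singleton]; ring
  have E4 : (Finset.univ.val.map η).esymm 4 = 3 + 6*c^2 + c^4 := by
    rw [hM]; simp [mes_cons, mes_nil, mes_zero, mes_singleton]; ring
  constructor
  · rw [eval_esymm]; exact E1
  · refine ⟨α*(3+3*c^2) + β*(9+9*c^2+2*c^4), fun i => ?_⟩
    set m : Multiset ℂ := (Finset.univ.erase i).val.map η with hm
    have hcons : η i ::ₘ m = Finset.univ.val.map η := by
      rw [hm, Finset.erase_val, ← Multiset.map_cons,
        Multiset.cons_erase (by simp : i ∈ (Finset.univ : Finset (Fin 10)).val)]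
    have f1 : m.esymm 1 = -(η i) := by
      have h := mes_cons (η i) m 0
      rw [hcons, E1, mes_zero] at h; linear_combination -h
    have f2 : m.esymm 2 = -3 - 2*c^2 - η i * m.esymm 1 := by
      have h := mes_cons (η i) m 1
      simp only [Nat.reduceAdd] at h
      rw [hcons, E2] at h; linear_combination -h
    have f3 : m.esymm 3 = - η i * m.esymm 2 := by
      have h := mes_cons (η i) m 2
      simp only [Nat.reduceAdd] at h
      rw [hcons, E3] at h; linear_combination -h
    have f4 : m.esymm 4 = 3 + 6*c^2 + c^4 - η i * m.esymm 3 := by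
      have h := mes_cons (η i) m 3
      simp only [Nat.reduceAdd] at h
      rw [hcons, E4] at h; linear_combination -h
    have g5 := eval_pderiv_esymm η i 4
    have g3 := eval_pderiv_esymm η i 2
    have g2 := eval_pderiv_esymm η i 1
    simp only [Nat.reduceAdd] at g5 g3 g2
    simp only [map_add, map_mul, pderiv_mul, pderiv_C, eval_C, map_zero, zero_mul, zero_add]
    rw [g5, g3, g2, ← hm, eval_esymm, eval_esymm, E2, E3, f4, f3, f2, f1]
    have ht : η i = 1 ∨ η i = -1 ∨ η i = c ∨ η i = -c := by
      subst hη
      fin_cases i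
      · exact Or.inl rfl
      · exact Or.inl rfl
      · exact Or.inl rfl
      · exact Or.inr (Or.inl rfl)
      · exact Or.inr (Or.inl rfl)
      · exact Or.inr (Or.inl rfl)
      · exact Or.inr (Or.inr (Or.inl rfl))
      · exact Or.inr (Or.inr (Or.inl rfl))
      · exact Or.inr (Or.inr (Or.inr rfl))
      · exact Or.inr (Or.inr (Or.inr rfl))
    rcases ht with h | h | h | h <;> rw [h]
    · linear_combination (c^2 - 1) * hc
    · linear_combination (c^2 - 1) * hc
    · ring
    · ring
end

section
/- (Case 3) Let α, β ∈ ℂ with (α, β) ≠ (0, 0), and let η := (1,1,1,1,1,1,1,1,−4,−4) ∈ ℂ^{10}. Then there exists μ ∈ ℂ with (∂F_{α,β}/∂x_i)(η) = μ for all i = 0,…,9 if and only if 49α + 100β = 0; that is, η is a singular point of the hyperquintic Q_{(α:β)} exactly for (α : β) = (100 : −49). -/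
open MvPolynomial Finset

noncomputable def esl : List ℂ → ℕ → ℂ
  | [], k => if k = 0 then 1 else 0
  | a :: l, k => if k = 0 then 1 else esl l k + a * esl l (k - 1)

lemma sum_powersetCard_insert {σ : Type*} [DecidableEq σ] (f : σ → ℂ) {a : σ} {s : Finset σ}
    (h : a ∉ s) (k : ℕ) :
    ∑ t ∈ (insert a s).powersetCard (k + 1), ∏ j ∈ t, f j
      = (∑ t ∈ s.powersetCard (k + 1), ∏ j ∈ t, f j)
        + f a * ∑ t ∈ s.powersetCard k, ∏ j ∈ t, f j := by
  have hdisj : Disjoint (s.powersetCard (k + 1)) ((s.powersetCard k).image (insert a)) := by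
    rw [Finset.disjoint_left]
    intro t ht hti
    obtain ⟨u, hu, rfl⟩ := Finset.mem_image.mp hti
    exact h ((Finset.mem_powersetCard.mp ht).1 (Finset.mem_insert_self a u))
  rw [Finset.powersetCard_succ_insert h, Finset.sum_union hdisj, Finset.mul_sum]
  congr 1
  rw [Finset.sum_image]
  · refine Finset.sum_congr rfl fun t ht => ?_
    have hat : a ∉ t := fun hat => h ((Finset.mem_powersetCard.mp ht).1 hat)
    rw [Finset.prod_insert hat]
  · intro t ht u hu e
    have hat : a ∉ t := fun hat => h ((Finset.mem_powersetCard.mp ht).1 hat)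
    have hau : a ∉ u := fun hau => h ((Finset.mem_powersetCard.mp hu).1 hau)
    have := congrArg (fun v => Finset.erase v a) e
    simpa [Finset.erase_insert hat, Finset.erase_insert hau] using this

lemma esl_eq {n : ℕ} (η : Fin n → ℂ) (l : List (Fin n)) (hl : l.Nodup) (k : ℕ) :
    ∑ t ∈ l.toFinset.powersetCard k, ∏ j ∈ t, η j = esl (l.map η) k := by
  induction l generalizing k with
  | nil =>
    cases k with
    | zero => simp [esl]
    | succ k =>
      rw [Finset.powersetCard_eq_empty.mpr (by simpa using k.succ_pos)]
      simp [esl]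
  | cons a l ih =>
    obtain ⟨ha, hl'⟩ := List.nodup_cons.mp hl
    have ha' : a ∉ l.toFinset := by simpa using ha
    cases k with
    | zero => simp [esl]
    | succ k =>
      rw [List.toFinset_cons, sum_powersetCard_insert η ha', ih hl', ih hl']
      simp [esl]

lemma pderiv_prod_X_s7 {σ : Type*} [DecidableEq σ] (i : σ) (s : Finset σ) :
    pderiv i (∏ j ∈ s, (X j : MvPolynomial σ ℂ))
      = if i ∈ s then ∏ j ∈ s.erase i, X j else 0 := by
  induction s using Finset.induction_on with
  | empty => simp
  | @insert a s ha ih =>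
    rw [Finset.prod_insert ha, pderiv_mul, ih]
    by_cases hia : i = a
    · subst hia
      simp [pderiv_X_self, ha, Finset.erase_insert ha,
        if_neg (fun h : i ∈ s => ha h)]
    · rw [pderiv_X_of_ne (Ne.symm hia)]
      by_cases his : i ∈ s
      · rw [if_pos his, if_pos (Finset.mem_insert_of_mem his),
          Finset.erase_insert_of_ne (Ne.symm hia) , Finset.prod_insert
            (fun h => ha (Finset.mem_of_mem_erase h))]
        ring
      · rw [if_neg his, if_neg (by simp [hia, his])]
        ring

lemma eval_pderiv_esymm_s7 {n : ℕ} (η : Fin n → ℂ) (i : Fin n) (k : ℕ) :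
    eval η (pderiv i (esymm (Fin n) ℂ (k + 1)))
      = ∑ t ∈ ((univ : Finset (Fin n)).erase i).powersetCard k, ∏ j ∈ t, η j := by
  have hdisj : Disjoint ((univ.erase i).powersetCard (k + 1))
      (((univ.erase i).powersetCard k).image (insert i)) := by
    rw [Finset.disjoint_left]
    intro t ht hti
    obtain ⟨u, hu, rfl⟩ := Finset.mem_image.mp hti
    exact Finset.notMem_erase i univ
      ((Finset.mem_powersetCard.mp ht).1 (Finset.mem_insert_self i u))
  have hu : powersetCard (k + 1) (univ : Finset (Fin n))
      = powersetCard (k + 1) (insert i (univ.erase i)) := by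
    rw [Finset.insert_erase (Finset.mem_univ i)]
  rw [esymm, map_sum, hu, Finset.powersetCard_succ_insert (Finset.notMem_erase i univ),
    Finset.sum_union hdisj, map_add, map_sum, map_sum]
  have h1 : ∑ t ∈ (univ.erase i).powersetCard (k + 1),
      eval η (pderiv i (∏ j ∈ t, (X j : MvPolynomial (Fin n) ℂ))) = 0 := by
    refine Finset.sum_eq_zero fun t ht => ?_
    have hit : i ∉ t := fun hit =>
      Finset.notMem_erase i univ ((Finset.mem_powersetCard.mp ht).1 hit)
    rw [pderiv_prod_X_s7, if_neg hit, map_zero]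
  rw [h1, zero_add, Finset.sum_image]
  · refine Finset.sum_congr rfl fun t ht => ?_
    have hit : i ∉ t := fun hit =>
      Finset.notMem_erase i univ ((Finset.mem_powersetCard.mp ht).1 hit)
    rw [pderiv_prod_X_s7, if_pos (Finset.mem_insert_self i t), Finset.erase_insert hit,
      eval_prod]
    simp
  · intro t ht u hu e
    have hit : i ∉ t := fun h =>
      Finset.notMem_erase i univ ((Finset.mem_powersetCard.mp ht).1 h)
    have hiu : i ∉ u := fun h =>
      Finset.notMem_erase i univ ((Finset.mem_powersetCard.mp hu).1 h)
    have := congrArg (fun v => Finset.erase v i) e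
    simpa [Finset.erase_insert hit, Finset.erase_insert hiu] using this

lemma eval_esymm_s7 {n : ℕ} (η : Fin n → ℂ) (k : ℕ) :
    eval η (esymm (Fin n) ℂ k) = ∑ t ∈ (univ : Finset (Fin n)).powersetCard k, ∏ j ∈ t, η j := by
  rw [esymm, map_sum]
  refine Finset.sum_congr rfl fun t _ => ?_
  rw [eval_prod]
  simp

/-- **Case 3.** For `(α, β) ≠ (0, 0)`, the point `η = (1,…,1,−4,−4)` is a singular
point of the hyperquintic `Q_{(α:β)} = {α·S₅ + β·S₂·S₃ = 0}` in `ℙ⁸(ℂ)` if and only if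
`49α + 100β = 0`, i.e. exactly for `(α : β) = (100 : −49)`. -/
theorem case3_singular_iff (α β : ℂ) (hαβ : (α, β) ≠ (0, 0)) (η : Fin 10 → ℂ)
    (hη : η = ![1, 1, 1, 1, 1, 1, 1, 1, -4, -4]) :
    (∃ μ : ℂ, ∀ i, eval η (pderiv i
        (C α * esymm (Fin 10) ℂ 5 + C β * (esymm (Fin 10) ℂ 2 * esymm (Fin 10) ℂ 3))) = μ)
      ↔ 49 * α + 100 * β = 0 := by
  have hL : ∀ k, ∑ t ∈ (univ : Finset (Fin 10)).powersetCard k, ∏ j ∈ t, η j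
      = esl (List.map η (List.finRange 10)) k := by
    intro k
    have := esl_eq η (List.finRange 10) (List.nodup_finRange 10) k
    rwa [List.toFinset_finRange] at this
  have hmap : List.map η (List.finRange 10) = [1, 1, 1, 1, 1, 1, 1, 1, -4, -4] := by
    rw [hη]; rfl
  rw [hmap] at hL
  have e1 : esl [(1:ℂ), 1, 1, 1, 1, 1, 1, 1, -4, -4] 1 = 0 := by norm_num [esl]
  have e2 : esl [(1:ℂ), 1, 1, 1, 1, 1, 1, 1, -4, -4] 2 = -20 := by norm_num [esl]
  have e3 : esl [(1:ℂ), 1, 1, 1, 1, 1, 1, 1, -4, -4] 3 = -40 := by norm_num [esl]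
  have e4 : esl [(1:ℂ), 1, 1, 1, 1, 1, 1, 1, -4, -4] 4 = 70 := by norm_num [esl]
  have hR : ∀ (i : Fin 10) (k : ℕ),
      ∑ t ∈ (univ : Finset (Fin 10)).powersetCard (k + 1), ∏ j ∈ t, η j
        = (∑ t ∈ ((univ : Finset (Fin 10)).erase i).powersetCard (k + 1), ∏ j ∈ t, η j)
          + η i * ∑ t ∈ ((univ : Finset (Fin 10)).erase i).powersetCard k, ∏ j ∈ t, η j := by
    intro i k
    have := sum_powersetCard_insert η (Finset.notMem_erase i univ) k
    rwa [Finset.insert_erase (Finset.mem_univ i)] at this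
  -- the per-index derivative values
  have hP : ∀ i : Fin 10,
      eval η (pderiv i (esymm (Fin 10) ℂ 2)) = -η i ∧
      eval η (pderiv i (esymm (Fin 10) ℂ 3)) = -20 + η i ^ 2 ∧
      eval η (pderiv i (esymm (Fin 10) ℂ 5)) = 70 + 40 * η i - 20 * η i ^ 2 + η i ^ 4 := by
    intro i
    have q0 : ∑ t ∈ ((univ : Finset (Fin 10)).erase i).powersetCard 0, ∏ j ∈ t, η j = 1 := by
      simp
    have q1 := hR i 0
    have q2 := hR i 1
    have q3 := hR i 2
    have q4 := hR i 3
    simp only [Nat.reduceAdd, zero_add] at q1 q2 q3 q4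
    rw [hL, e1, q0] at q1
    rw [hL, e2] at q2
    rw [hL, e3] at q3
    rw [hL, e4] at q4
    have p1 := eval_pderiv_esymm_s7 η i 1
    have p2 := eval_pderiv_esymm_s7 η i 2
    have p4 := eval_pderiv_esymm_s7 η i 4
    simp only [Nat.reduceAdd] at p1 p2 p4
    refine ⟨?_, ?_, ?_⟩
    · rw [p1]; linear_combination -q1
    · rw [p2]; linear_combination -q2 + η i * q1
    · rw [p4]; linear_combination -q4 + η i * q3 - (η i)^2 * q2 + (η i)^3 * q1
  have hE2 : eval η (esymm (Fin 10) ℂ 2) = -20 := by rw [eval_esymm_s7, hL, e2]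
  have hE3 : eval η (esymm (Fin 10) ℂ 3) = -40 := by rw [eval_esymm_s7, hL, e3]
  have hD : ∀ i : Fin 10,
      eval η (pderiv i
        (C α * esymm (Fin 10) ℂ 5 + C β * (esymm (Fin 10) ℂ 2 * esymm (Fin 10) ℂ 3)))
      = α * (70 + 40 * η i - 20 * η i ^ 2 + η i ^ 4)
        + β * ((-η i) * (-40) + (-20) * (-20 + η i ^ 2)) := by
    intro i
    obtain ⟨h2, h3, h5⟩ := hP i
    simp only [map_add, pderiv_mul, pderiv_C, map_mul, map_zero, zero_mul, eval_C, h2, h3, h5, hE2, hE3]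
    ring
  constructor
  · rintro ⟨μ, hμ⟩
    have h08 := (hμ 0).trans (hμ 8).symm
    have hη0 : η 0 = 1 := by rw [hη]; rfl
    have hη8 : η 8 = -4 := by rw [hη]; rfl
    rw [hD 0, hD 8, hη0, hη8] at h08
    linear_combination h08 / 5
  · intro h
    refine ⟨91 * α + 420 * β, fun i => ?_⟩
    rw [hD i]
    have hx : η i = 1 ∨ η i = -4 := by
      rw [hη]; fin_cases i <;> norm_num
    rcases hx with hx | hx <;> rw [hx]
    · ring
    · linear_combination (-5 : ℂ) * h
end
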